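/- Let B be a connected building set on S and let I_1, I_2 ∈ B with I_1 ∩ I_2 ≠ ∅, I_1 ⊄ I_2, I_2 ⊄ I_1 and I_1 ∩ I_2 ∉ B. Then there exist J_1, J_2 ∈ B, j_1 ∈ J_1 \ J_2, j_2 ∈ J_2 \ J_1, a maximal nested set N of B|_{J_1 ∩ J_2}, and a maximal nested set N′ of B|_{(J_1 △ J_2) \ {j_1, j_2}} (with N′ and (B|_{(J_1 △ J_2) \ {j_1, j_2}})_max understood to be empty if J_1 △ J_2 = {j_1, j_2}), such that J_1 ∩ J_2 ≠ ∅, J_1 ∩ J_2 ∉ B, J_1 ∪ J_2 ⊆ I_1 ∪ I_2, and for each k = 1, 2 the set {J_k} ∪ N ∪ (B|_{J_1 ∩ J_2})_max ∪ N′ ∪ (B|_{(J_1 △ J_2) \ {j_1, j_2}})_max is a nested set of B. -/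

import Mathlib

/-- A building set on a nonempty finite set `S`: a finite set of nonempty subsets of `S`
closed under unions of intersecting members, and containing all singletons. -/
def IsBuilding (S : Finset ℕ) (B : Finset (Finset ℕ)) : Prop :=
  (∀ I ∈ B, I ⊆ S ∧ I.Nonempty) ∧
  (∀ I ∈ B, ∀ J ∈ B, (I ∩ J).Nonempty → I ∪ J ∈ B) ∧
  (∀ i ∈ S, ({i} : Finset ℕ) ∈ B)

/-- The set of maximal (by inclusion) elements of `B`. -/
def Bmax (B : Finset (Finset ℕ)) : Finset (Finset ℕ) :=
  B.filter (fun I => ∀ J ∈ B, I ⊆ J → I = J)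

/-- The restriction `B|_C = {I ∈ B : I ⊆ C}`. -/
def restrict (B : Finset (Finset ℕ)) (C : Finset ℕ) : Finset (Finset ℕ) :=
  B.filter (fun I => I ⊆ C)

/-- `N` is a nested set of `B`: a subset of `B \ Bmax B` whose members are pairwise
nested or disjoint, such that no union of `k ≥ 2` pairwise disjoint members lies in `B`. -/
def IsNested (B N : Finset (Finset ℕ)) : Prop :=
  N ⊆ B \ Bmax B ∧
  (∀ I ∈ N, ∀ J ∈ N, I ⊆ J ∨ J ⊆ I ∨ I ∩ J = ∅) ∧
  (∀ F ⊆ N, 2 ≤ F.card → (∀ I ∈ F, ∀ J ∈ F, I ≠ J → I ∩ J = ∅) → F.sup id ∉ B)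

/-- `N` is a maximal (by inclusion) nested set of `B`. -/
def MaxNested (B N : Finset (Finset ℕ)) : Prop :=
  IsNested B N ∧ ∀ N' : Finset (Finset ℕ), IsNested B N' → N ⊆ N' → N = N'

open Finset

lemma mem_restrict {B : Finset (Finset ℕ)} {C I : Finset ℕ} :
    I ∈ restrict B C ↔ I ∈ B ∧ I ⊆ C := by simp [_root_.restrict]

lemma mem_Bmax {B : Finset (Finset ℕ)} {I : Finset ℕ} :
    I ∈ Bmax B ↔ I ∈ B ∧ ∀ J ∈ B, I ⊆ J → I = J := by simp [Bmax]

lemma nested_empty (B : Finset (Finset ℕ)) : IsNested B ∅ := by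
  refine ⟨empty_subset _, ?_, ?_⟩
  · intro I hI; exact absurd hI (notMem_empty I)
  · intro F hF hcard _
    have : F = ∅ := subset_empty.mp hF
    simp [this] at hcard

lemma exists_maxNested (B : Finset (Finset ℕ)) : ∃ N, MaxNested B N := by
  classical
  set s := (B \ Bmax B).powerset.filter (fun N => IsNested B N) with hs
  have hne : s.Nonempty := ⟨∅, by simp [hs, nested_empty B]⟩
  obtain ⟨N, hNs, hmax⟩ := s.exists_maximal hne
  refine ⟨N, (mem_filter.mp hNs).2, ?_⟩
  intro N' hN' hsub
  by_contra hne'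
  have hN's : N' ∈ s := mem_filter.mpr ⟨mem_powerset.mpr hN'.1, hN'⟩
  exact hne' (Finset.Subset.antisymm hsub (hmax hN's hsub))

lemma restrict_closed {S : Finset ℕ} {B : Finset (Finset ℕ)} (hB : IsBuilding S B) (C : Finset ℕ) :
    ∀ I ∈ restrict B C, ∀ J ∈ restrict B C, (I ∩ J).Nonempty → I ∪ J ∈ restrict B C := by
  intro I hI J hJ hIJ
  rw [mem_restrict] at hI hJ ⊢
  exact ⟨hB.2.1 I hI.1 J hJ.1 hIJ, union_subset hI.2 hJ.2⟩

lemma nested_or_disjoint {B' N : Finset (Finset ℕ)}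
    (hclosed : ∀ I ∈ B', ∀ J ∈ B', (I ∩ J).Nonempty → I ∪ J ∈ B')
    (hN : IsNested B' N) :
    ∀ I ∈ N ∪ Bmax B', ∀ J ∈ N ∪ Bmax B', I ⊆ J ∨ J ⊆ I ∨ I ∩ J = ∅ := by
  have hmem : ∀ I ∈ N ∪ Bmax B', I ∈ B' := by
    intro I hI
    rcases mem_union.mp hI with h | h
    · exact (mem_sdiff.mp (hN.1 h)).1
    · exact (mem_Bmax.mp h).1
  have hmax : ∀ I ∈ N ∪ Bmax B', ∀ M ∈ Bmax B', ¬ I ∩ M = ∅ → I ⊆ M := by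
    intro I hI M hM hne
    have h1 : I ∪ M ∈ B' := hclosed I (hmem I hI) M (mem_Bmax.mp hM).1
      (nonempty_iff_ne_empty.mpr hne)
    have h2 : M = I ∪ M := (mem_Bmax.mp hM).2 _ h1 subset_union_right
    exact le_of_le_of_eq subset_union_left h2.symm
  intro I hI J hJ
  rcases mem_union.mp hI with hIN | hIM
  · rcases mem_union.mp hJ with hJN | hJM
    · exact hN.2.1 I hIN J hJN
    · by_cases h : I ∩ J = ∅
      · exact Or.inr (Or.inr h)
      · exact Or.inl (hmax I hI J hJM h)
  · by_cases h : I ∩ J = ∅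
    · exact Or.inr (Or.inr h)
    · refine Or.inr (Or.inl (hmax J hJ I hIM ?_))
      rw [inter_comm]; exact h

lemma sup_not_mem {B' N : Finset (Finset ℕ)}
    (hne : ∀ I ∈ B', I.Nonempty) (hN : IsNested B' N) :
    ∀ F ⊆ N ∪ Bmax B', 2 ≤ F.card →
      (∀ I ∈ F, ∀ J ∈ F, I ≠ J → I ∩ J = ∅) → F.sup id ∉ B' := by
  intro F hF hcard hdisj hsup
  by_cases hFM : ∃ M ∈ F, M ∈ Bmax B'
  · obtain ⟨M, hMF, hMmax⟩ := hFM
    have hMs : M = F.sup id := (mem_Bmax.mp hMmax).2 _ hsup (le_sup (f := id) hMF)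
    obtain ⟨X, hXF, hXM⟩ := Finset.exists_mem_ne (s := F) (by omega) M
    have hXB : X ∈ B' := by
      rcases mem_union.mp (hF hXF) with h | h
      · exact (mem_sdiff.mp (hN.1 h)).1
      · exact (mem_Bmax.mp h).1
    obtain ⟨x, hx⟩ := hne X hXB
    have hxM : x ∈ X ∩ M := by
      refine mem_inter.mpr ⟨hx, ?_⟩
      rw [hMs]; exact (le_sup (f := id) hXF) hx
    rw [hdisj X hXF M hMF hXM] at hxM
    exact notMem_empty x hxM
  · push_neg at hFM
    have hFN : F ⊆ N := by
      intro X hX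
      rcases mem_union.mp (hF hX) with h | h
      · exact h
      · exact absurd h (hFM X hX)
    exact hN.2.2 F hFN hcard hdisj hsup

/-- Master structural lemma: no `Y ∈ B` inside `J₁ ∪ J₂` avoiding `j₁` can meet both
`J₁ \ J₂` and `J₂`. -/
lemma master (B : Finset (Finset ℕ))
    (hclosed : ∀ I ∈ B, ∀ J ∈ B, (I ∩ J).Nonempty → I ∪ J ∈ B)
    (J₁ J₂ : Finset ℕ) (hJ₁ : J₁ ∈ B) (hJ₂ : J₂ ∈ B)
    (j₁ : ℕ) (hj₁ : j₁ ∈ J₁ \ J₂)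
    (hA : (J₁ ∩ J₂).Nonempty) (hAB : J₁ ∩ J₂ ∉ B)
    (P1 : ∀ K₁ ∈ B, ∀ K₂ ∈ B, (K₁ ∩ K₂).Nonempty → K₁ ∩ K₂ ∉ B →
        K₁ ∪ K₂ ⊆ J₁ ∪ J₂ → K₁ ∪ K₂ = J₁ ∪ J₂)
    (P2 : ∀ K₁ ∈ B, ∀ K₂ ∈ B, (K₁ ∩ K₂).Nonempty → K₁ ∪ K₂ = J₁ ∪ J₂ →
        J₁ ∩ J₂ ⊂ K₁ ∩ K₂ → K₁ ∩ K₂ ∈ B)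
    (Y : Finset ℕ) (hY : Y ∈ B) (hYU : Y ⊆ J₁ ∪ J₂) (hj₁Y : j₁ ∉ Y)
    (h1 : (Y ∩ (J₁ \ J₂)).Nonempty) (h2 : (Y ∩ J₂).Nonempty) : False := by
  obtain ⟨hj₁1, hj₁2⟩ := mem_sdiff.mp hj₁
  have hY' : Y ∪ J₂ ∈ B := hclosed Y hY J₂ hJ₂ h2
  have hsubA : J₁ ∩ J₂ ⊆ J₁ ∩ (Y ∪ J₂) :=
    inter_subset_inter Subset.rfl subset_union_right
  have hZB : J₁ ∩ (Y ∪ J₂) ∈ B := by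
    refine P2 J₁ hJ₁ (Y ∪ J₂) hY' (hA.mono hsubA) ?_ ?_
    · apply Subset.antisymm
      · exact union_subset subset_union_left (union_subset hYU subset_union_right)
      · exact union_subset subset_union_left
          (subset_union_right.trans (subset_union_right (s₁ := J₁)))
    · refine ⟨hsubA, ?_⟩
      intro hcontra
      obtain ⟨x, hx⟩ := h1
      obtain ⟨hxY, hxJ⟩ := mem_inter.mp hx
      obtain ⟨hxJ₁, hxJ₂⟩ := mem_sdiff.mp hxJ
      have : x ∈ J₁ ∩ J₂ := hcontra (mem_inter.mpr ⟨hxJ₁, mem_union_left _ hxY⟩)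
      exact hxJ₂ (mem_inter.mp this).2
  have hZJ₂ : (J₁ ∩ (Y ∪ J₂)) ∩ J₂ = J₁ ∩ J₂ := by
    ext a
    simp only [mem_inter, mem_union]
    tauto
  have hfin : (J₁ ∩ (Y ∪ J₂)) ∪ J₂ = J₁ ∪ J₂ := by
    refine P1 _ hZB J₂ hJ₂ ?_ ?_ ?_
    · rw [hZJ₂]; exact hA
    · rw [hZJ₂]; exact hAB
    · exact union_subset (inter_subset_left.trans subset_union_left) subset_union_right
  have hj₁mem : j₁ ∈ (J₁ ∩ (Y ∪ J₂)) ∪ J₂ := hfin ▸ mem_union_left _ hj₁1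
  rcases mem_union.mp hj₁mem with h | h
  · rcases mem_union.mp (mem_inter.mp h).2 with h' | h'
    · exact hj₁Y h'
    · exact hj₁2 h'
  · exact hj₁2 h

/-- Case lemma: `J₁ ∪ V ∈ B` is impossible for nonempty `V ⊆ J₂ \ J₁` avoiding `j₂`. -/
lemma caseJ (B : Finset (Finset ℕ))
    (J₁ J₂ : Finset ℕ) (hJ₁ : J₁ ∈ B) (hJ₂ : J₂ ∈ B)
    (j₂ : ℕ) (hj₂ : j₂ ∈ J₂ \ J₁)
    (hA : (J₁ ∩ J₂).Nonempty) (hAB : J₁ ∩ J₂ ∉ B)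
    (P1 : ∀ K₁ ∈ B, ∀ K₂ ∈ B, (K₁ ∩ K₂).Nonempty → K₁ ∩ K₂ ∉ B →
        K₁ ∪ K₂ ⊆ J₁ ∪ J₂ → K₁ ∪ K₂ = J₁ ∪ J₂)
    (P2 : ∀ K₁ ∈ B, ∀ K₂ ∈ B, (K₁ ∩ K₂).Nonempty → K₁ ∪ K₂ = J₁ ∪ J₂ →
        J₁ ∩ J₂ ⊂ K₁ ∩ K₂ → K₁ ∩ K₂ ∈ B)
    (V : Finset ℕ) (hVne : V.Nonempty) (hV2 : V ⊆ J₂) (hV1 : V ∩ J₁ = ∅)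
    (hj₂V : j₂ ∉ V) (hW : J₁ ∪ V ∈ B) : False := by
  obtain ⟨hj₂2, hj₂1⟩ := mem_sdiff.mp hj₂
  have hsubA : J₁ ∩ J₂ ⊆ (J₁ ∪ V) ∩ J₂ :=
    inter_subset_inter subset_union_left Subset.rfl
  have hZB : (J₁ ∪ V) ∩ J₂ ∈ B := by
    refine P2 (J₁ ∪ V) hW J₂ hJ₂ (hA.mono hsubA) ?_ ?_
    · apply Subset.antisymm
      · exact union_subset (union_subset subset_union_left (hV2.trans subset_union_right))
          subset_union_right
      · exact union_subset (subset_union_left.trans subset_union_left) subset_union_right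
    · refine ⟨hsubA, ?_⟩
      intro hcontra
      obtain ⟨v, hv⟩ := hVne
      have hvJ₁ : v ∉ J₁ := by
        intro h
        have : v ∈ V ∩ J₁ := mem_inter.mpr ⟨hv, h⟩
        rw [hV1] at this; exact notMem_empty v this
      have : v ∈ J₁ ∩ J₂ :=
        hcontra (mem_inter.mpr ⟨mem_union_right _ hv, hV2 hv⟩)
      exact hvJ₁ (mem_inter.mp this).1
  have hZJ₁ : ((J₁ ∪ V) ∩ J₂) ∩ J₁ = J₁ ∩ J₂ := by
    ext a
    simp only [mem_inter, mem_union]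
    constructor
    · rintro ⟨⟨_, ha2⟩, ha1⟩; exact ⟨ha1, ha2⟩
    · rintro ⟨ha1, ha2⟩; exact ⟨⟨Or.inl ha1, ha2⟩, ha1⟩
  have hfin : ((J₁ ∪ V) ∩ J₂) ∪ J₁ = J₁ ∪ J₂ := by
    refine P1 _ hZB J₁ hJ₁ ?_ ?_ ?_
    · rw [hZJ₁]; exact hA
    · rw [hZJ₁]; exact hAB
    · exact union_subset (inter_subset_right.trans subset_union_right) subset_union_left
  have hj₂mem : j₂ ∈ ((J₁ ∪ V) ∩ J₂) ∪ J₁ := hfin ▸ mem_union_right _ hj₂2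
  rcases mem_union.mp hj₂mem with h | h
  · rcases mem_union.mp (mem_inter.mp h).1 with h' | h'
    · exact hj₂1 h'
    · exact hj₂V h'
  · exact hj₂1 h

lemma key (S : Finset ℕ) (B : Finset (Finset ℕ)) (hB : IsBuilding S B) (hconn : Bmax B = {S})
    (J₁ J₂ : Finset ℕ) (hJ₁ : J₁ ∈ B) (hJ₂ : J₂ ∈ B)
    (j₁ j₂ : ℕ) (hj₁ : j₁ ∈ J₁ \ J₂) (hj₂ : j₂ ∈ J₂ \ J₁)
    (hA : (J₁ ∩ J₂).Nonempty) (hAB : J₁ ∩ J₂ ∉ B)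
    (P1 : ∀ K₁ ∈ B, ∀ K₂ ∈ B, (K₁ ∩ K₂).Nonempty → K₁ ∩ K₂ ∉ B →
        K₁ ∪ K₂ ⊆ J₁ ∪ J₂ → K₁ ∪ K₂ = J₁ ∪ J₂)
    (P2 : ∀ K₁ ∈ B, ∀ K₂ ∈ B, (K₁ ∩ K₂).Nonempty → K₁ ∪ K₂ = J₁ ∪ J₂ →
        J₁ ∩ J₂ ⊂ K₁ ∩ K₂ → K₁ ∩ K₂ ∈ B)
    (N N' : Finset (Finset ℕ))
    (hN : IsNested (restrict B (J₁ ∩ J₂)) N)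
    (hN' : IsNested (restrict B (((J₁ ∪ J₂) \ (J₁ ∩ J₂)) \ {j₁, j₂})) N') :
    IsNested B (insert J₁ (N ∪ Bmax (restrict B (J₁ ∩ J₂)) ∪ N' ∪
      Bmax (restrict B (((J₁ ∪ J₂) \ (J₁ ∩ J₂)) \ {j₁, j₂})))) := by
  classical
  obtain ⟨hj₁1, hj₁2⟩ := mem_sdiff.mp hj₁
  obtain ⟨hj₂2, hj₂1⟩ := mem_sdiff.mp hj₂
  set A := J₁ ∩ J₂ with hA_def
  set D := ((J₁ ∪ J₂) \ A) \ {j₁, j₂} with hD_def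
  have hclosed : ∀ I ∈ B, ∀ J ∈ B, (I ∩ J).Nonempty → I ∪ J ∈ B := hB.2.1
  have hBne : ∀ X ∈ B, X.Nonempty := fun X h => (hB.1 X h).2
  have hAJ₁ : A ⊆ J₁ := inter_subset_left
  have hAJ₂ : A ⊆ J₂ := inter_subset_right
  have hDU : D ⊆ J₁ ∪ J₂ := sdiff_subset.trans sdiff_subset
  have hj₁A : j₁ ∉ A := fun h => hj₁2 (hAJ₂ h)
  have hj₂A : j₂ ∉ A := fun h => hj₂1 (hAJ₁ h)
  have hj₁D : j₁ ∉ D := by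
    intro h
    exact (mem_sdiff.mp h).2 (mem_insert_self _ _)
  have hj₂D : j₂ ∉ D := by
    intro h
    exact (mem_sdiff.mp h).2 (mem_insert_of_mem (mem_singleton_self _))
  have hAD : ∀ x, x ∈ A → x ∈ D → False := by
    intro x hxA hxD
    exact (mem_sdiff.mp (mem_sdiff.mp hxD).1).2 hxA
  -- swapped versions of hypotheses
  have hA' : (J₂ ∩ J₁).Nonempty := by rwa [inter_comm]
  have hAB' : J₂ ∩ J₁ ∉ B := by rwa [inter_comm]
  have P1' : ∀ K₁ ∈ B, ∀ K₂ ∈ B, (K₁ ∩ K₂).Nonempty → K₁ ∩ K₂ ∉ B →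
      K₁ ∪ K₂ ⊆ J₂ ∪ J₁ → K₁ ∪ K₂ = J₂ ∪ J₁ := by
    intro K₁ h1 K₂ h2 h3 h4 h5
    rw [union_comm J₂ J₁] at h5 ⊢
    exact P1 K₁ h1 K₂ h2 h3 h4 h5
  have P2' : ∀ K₁ ∈ B, ∀ K₂ ∈ B, (K₁ ∩ K₂).Nonempty → K₁ ∪ K₂ = J₂ ∪ J₁ →
      J₂ ∩ J₁ ⊂ K₁ ∩ K₂ → K₁ ∩ K₂ ∈ B := by
    intro K₁ h1 K₂ h2 h3 h4 h5
    rw [union_comm J₂ J₁] at h4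
    rw [inter_comm J₂ J₁] at h5
    exact P2 K₁ h1 K₂ h2 h3 h4 h5
  -- group membership facts
  have hGA : ∀ X ∈ N ∪ Bmax (restrict B A), X ∈ B ∧ X ⊆ A := by
    intro X hX
    rcases mem_union.mp hX with h | h
    · exact mem_restrict.mp (mem_sdiff.mp (hN.1 h)).1
    · exact mem_restrict.mp (mem_Bmax.mp h).1
  have hGD : ∀ X ∈ N' ∪ Bmax (restrict B D), X ∈ B ∧ X ⊆ D := by
    intro X hX
    rcases mem_union.mp hX with h | h
    · exact mem_restrict.mp (mem_sdiff.mp (hN'.1 h)).1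
    · exact mem_restrict.mp (mem_Bmax.mp h).1
  have hG : ∀ X ∈ N ∪ Bmax (restrict B A) ∪ N' ∪ Bmax (restrict B D),
      X ∈ N ∪ Bmax (restrict B A) ∨ X ∈ N' ∪ Bmax (restrict B D) := by
    intro X hX
    simp only [mem_union] at hX ⊢
    tauto
  -- structure lemma for subsets of D
  have hSD : ∀ X ∈ B, X ⊆ D → X ⊆ J₁ \ J₂ ∨ X ⊆ J₂ \ J₁ := by
    intro X hX hXD
    have hXU : X ⊆ J₁ ∪ J₂ := hXD.trans hDU
    have hj₁X : j₁ ∉ X := fun h => hj₁D (hXD h)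
    have hj₂X : j₂ ∉ X := fun h => hj₂D (hXD h)
    have hXA : ∀ x ∈ X, x ∉ A := fun x hx h => hAD x h (hXD hx)
    by_cases hc : (X ∩ (J₁ \ J₂)).Nonempty
    · left
      intro x hx
      rcases mem_union.mp (hXU hx) with h | h
      · refine mem_sdiff.mpr ⟨h, fun h2 => ?_⟩
        exact hXA x hx (mem_inter.mpr ⟨h, h2⟩)
      · exfalso
        exact master B hclosed J₁ J₂ hJ₁ hJ₂ j₁ hj₁ hA hAB P1 P2 X hX hXU hj₁X hc
          ⟨x, mem_inter.mpr ⟨hx, h⟩⟩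
    · right
      intro x hx
      rcases mem_union.mp (hXU hx) with h | h
      · exfalso
        have hxJ₂ : x ∉ J₂ := fun h2 => hXA x hx (mem_inter.mpr ⟨h, h2⟩)
        exact hc ⟨x, mem_inter.mpr ⟨hx, mem_sdiff.mpr ⟨h, hxJ₂⟩⟩⟩
      · refine mem_sdiff.mpr ⟨h, fun h1 => ?_⟩
        exact hXA x hx (mem_inter.mpr ⟨h1, h⟩)
  refine ⟨?_, ?_, ?_⟩
  · -- condition 1
    intro X hX
    rw [mem_sdiff, hconn, mem_singleton]
    rcases mem_insert.mp hX with rfl | hXG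
    · refine ⟨hJ₁, fun hXS => ?_⟩
      have hJ₂S : J₂ ⊆ X := hXS ▸ (hB.1 J₂ hJ₂).1
      have : A = J₂ := by rw [hA_def, inter_eq_right.mpr hJ₂S]
      exact hAB (this ▸ hJ₂)
    · rcases hG X hXG with h | h
      · refine ⟨(hGA X h).1, fun hXS => ?_⟩
        have : j₂ ∈ X := hXS ▸ (hB.1 J₂ hJ₂).1 hj₂2
        exact hj₂A ((hGA X h).2 this)
      · refine ⟨(hGD X h).1, fun hXS => ?_⟩
        have : j₂ ∈ X := hXS ▸ (hB.1 J₂ hJ₂).1 hj₂2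
        exact hj₂D ((hGD X h).2 this)
  · -- condition 2: pairwise nested or disjoint
    have hJ₁side : ∀ X ∈ N ∪ Bmax (restrict B A) ∪ N' ∪ Bmax (restrict B D),
        X ⊆ J₁ ∨ X ∩ J₁ = ∅ := by
      intro X hXG
      rcases hG X hXG with h | h
      · exact Or.inl ((hGA X h).2.trans hAJ₁)
      · rcases hSD X (hGD X h).1 (hGD X h).2 with h' | h'
        · exact Or.inl (h'.trans sdiff_subset)
        · refine Or.inr (eq_empty_iff_forall_notMem.mpr fun x hx => ?_)
          obtain ⟨hx1, hx2⟩ := mem_inter.mp hx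
          exact (mem_sdiff.mp (h' hx1)).2 hx2
    intro I hI J hJ
    rcases mem_insert.mp hI with rfl | hIG
    · rcases mem_insert.mp hJ with rfl | hJG
      · exact Or.inl Subset.rfl
      · rcases hJ₁side J hJG with h | h
        · exact Or.inr (Or.inl h)
        · refine Or.inr (Or.inr ?_)
          rw [inter_comm]; exact h
    · rcases mem_insert.mp hJ with rfl | hJG
      · rcases hJ₁side I hIG with h | h
        · exact Or.inl h
        · exact Or.inr (Or.inr h)
      · rcases hG I hIG with hIa | hId
        · rcases hG J hJG with hJa | hJd
          · exact nested_or_disjoint (restrict_closed hB A) hN I hIa J hJa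
          · refine Or.inr (Or.inr (eq_empty_iff_forall_notMem.mpr fun x hx => ?_))
            obtain ⟨hx1, hx2⟩ := mem_inter.mp hx
            exact hAD x ((hGA I hIa).2 hx1) ((hGD J hJd).2 hx2)
        · rcases hG J hJG with hJa | hJd
          · refine Or.inr (Or.inr (eq_empty_iff_forall_notMem.mpr fun x hx => ?_))
            obtain ⟨hx1, hx2⟩ := mem_inter.mp hx
            exact hAD x ((hGA J hJa).2 hx2) ((hGD I hId).2 hx1)
          · exact nested_or_disjoint (restrict_closed hB D) hN' I hId J hJd
  · -- condition 3
    intro F hF hcard hdisj hsup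
    by_cases hJF : J₁ ∈ F
    · -- case J₁ ∈ F
      set F' := F.erase J₁ with hF'_def
      have hF'card : F'.card = F.card - 1 := card_erase_of_mem hJF
      have hF'ne : F'.Nonempty := card_pos.mp (by omega)
      have hmemF' : ∀ X ∈ F', X ⊆ J₂ \ J₁ ∧ j₂ ∉ X ∧ X.Nonempty := by
        intro X hX
        have hXne : X ≠ J₁ := ne_of_mem_erase hX
        have hXF : X ∈ F := mem_of_mem_erase hX
        have hXG : X ∈ N ∪ Bmax (restrict B A) ∪ N' ∪ Bmax (restrict B D) := by
          rcases mem_insert.mp (hF hXF) with h | h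
          · exact absurd h hXne
          · exact h
        have hXdisj : X ∩ J₁ = ∅ := hdisj X hXF J₁ hJF hXne
        have hXB : X ∈ B := by
          rcases hG X hXG with h | h
          · exact (hGA X h).1
          · exact (hGD X h).1
        have hXnonempty : X.Nonempty := hBne X hXB
        have hXD : X ⊆ D := by
          rcases hG X hXG with h | h
          · exfalso
            obtain ⟨x, hx⟩ := hXnonempty
            have : x ∈ X ∩ J₁ := mem_inter.mpr ⟨hx, hAJ₁ ((hGA X h).2 hx)⟩
            rw [hXdisj] at this; exact notMem_empty x this
          · exact (hGD X h).2
        rcases hSD X hXB hXD with h | h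
        · exfalso
          obtain ⟨x, hx⟩ := hXnonempty
          have : x ∈ X ∩ J₁ := mem_inter.mpr ⟨hx, (mem_sdiff.mp (h hx)).1⟩
          rw [hXdisj] at this; exact notMem_empty x this
        · exact ⟨h, fun hc => hj₂D (hXD hc), hXnonempty⟩
      set V := F'.sup id with hV_def
      have hVsub : V ⊆ J₂ \ J₁ := by
        intro x hx
        obtain ⟨X, hXF, hxX⟩ := mem_sup.mp hx
        exact (hmemF' X hXF).1 hxX
      have hVne : V.Nonempty := by
        obtain ⟨X, hX⟩ := hF'ne
        obtain ⟨x, hx⟩ := (hmemF' X hX).2.2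
        exact ⟨x, (le_sup (f := id) hX) hx⟩
      have hj₂V : j₂ ∉ V := by
        intro h
        obtain ⟨X, hXF', hxX⟩ := mem_sup.mp h
        exact (hmemF' X hXF').2.1 hxX
      have hsupF : F.sup id = J₁ ∪ V := by
        conv_lhs => rw [← insert_erase hJF]
        rw [sup_insert]
        rfl
      rw [hsupF] at hsup
      exact caseJ B J₁ J₂ hJ₁ hJ₂ j₂ hj₂ hA hAB P1 P2 V hVne
        (hVsub.trans sdiff_subset)
        (eq_empty_iff_forall_notMem.mpr fun x hx => by
          obtain ⟨hx1, hx2⟩ := mem_inter.mp hx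
          exact (mem_sdiff.mp (hVsub hx1)).2 hx2)
        hj₂V hsup
    · -- case J₁ ∉ F
      have hFG : ∀ X ∈ F, X ∈ N ∪ Bmax (restrict B A) ∪ N' ∪ Bmax (restrict B D) := by
        intro X hX
        rcases mem_insert.mp (hF hX) with h | h
        · exact absurd (h ▸ hX) hJF
        · exact h
      set FA := F.filter (fun X => X ⊆ A) with hFA_def
      set FD := F.filter (fun X => ¬ X ⊆ A) with hFD_def
      have hFAsub : FA ⊆ N ∪ Bmax (restrict B A) := by
        intro X hX
        obtain ⟨hXF, hXA⟩ := mem_filter.mp hX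
        rcases hG X (hFG X hXF) with h | h
        · exact h
        · exfalso
          obtain ⟨x, hx⟩ := hBne X (hGD X h).1
          exact hAD x (hXA hx) ((hGD X h).2 hx)
      have hFDsub : FD ⊆ N' ∪ Bmax (restrict B D) := by
        intro X hX
        obtain ⟨hXF, hXA⟩ := mem_filter.mp hX
        rcases hG X (hFG X hXF) with h | h
        · exact absurd (hGA X h).2 hXA
        · exact h
      have hFDD : ∀ X ∈ FD, X ⊆ D := fun X hX => (hGD X (hFDsub hX)).2
      have hsplit : FA ∪ FD = F := filter_union_filter_not_eq _ F
      have hsupsplit : F.sup id = FA.sup id ∪ FD.sup id := by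
        rw [← hsplit, sup_union]
        rfl
      have hYA : FA.sup id ⊆ A := by
        intro x hx
        obtain ⟨X, hXF, hxX⟩ := mem_sup.mp hx
        exact (mem_filter.mp hXF).2 hxX
      have hYD : FD.sup id ⊆ D := by
        intro x hx
        obtain ⟨X, hXF, hxX⟩ := mem_sup.mp hx
        exact hFDD X hXF hxX
      by_cases hFAe : FA = ∅
      · -- all in D-part
        have hFeq : FD = F := by rw [← hsplit, hFAe, empty_union]
        refine sup_not_mem (B' := restrict B D) (fun I hI => hBne I (mem_restrict.mp hI).1)
          hN' F (hFeq ▸ hFDsub) hcard hdisj ?_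
        exact mem_restrict.mpr ⟨hsup, by rw [hsupsplit, hFAe]; simpa using hYD⟩
      · by_cases hFDe : FD = ∅
        · -- all in A-part
          have hFeq : FA = F := by rw [← hsplit, hFDe, union_empty]
          refine sup_not_mem (B' := restrict B A) (fun I hI => hBne I (mem_restrict.mp hI).1)
            hN F (hFeq ▸ hFAsub) hcard hdisj ?_
          exact mem_restrict.mpr ⟨hsup, by rw [hsupsplit, hFDe]; simpa using hYA⟩
        · -- mixed: impossible by master
          have hYU : F.sup id ⊆ J₁ ∪ J₂ := by
            rw [hsupsplit]
            exact union_subset (hYA.trans (hAJ₁.trans subset_union_left)) (hYD.trans hDU)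
          have hj₁Y : j₁ ∉ F.sup id := by
            rw [hsupsplit]
            intro h
            rcases mem_union.mp h with h | h
            · exact hj₁A (hYA h)
            · exact hj₁D (hYD h)
          have hj₂Y : j₂ ∉ F.sup id := by
            rw [hsupsplit]
            intro h
            rcases mem_union.mp h with h | h
            · exact hj₂A (hYA h)
            · exact hj₂D (hYD h)
          -- an element of A inside the sup
          obtain ⟨XA, hXA⟩ := nonempty_iff_ne_empty.mpr hFAe
          obtain ⟨a, ha⟩ := hBne XA (hGA XA (hFAsub hXA)).1
          have haA : a ∈ A := (mem_filter.mp hXA).2 ha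
          have haY : a ∈ F.sup id := by
            rw [hsupsplit]
            exact mem_union_left _ ((le_sup (f := id) hXA) ha)
          -- an element of D inside the sup
          obtain ⟨XD, hXD⟩ := nonempty_iff_ne_empty.mpr hFDe
          obtain ⟨d, hd⟩ := hBne XD (hGD XD (hFDsub hXD)).1
          have hdD : d ∈ D := hFDD XD hXD hd
          have hdY : d ∈ F.sup id := by
            rw [hsupsplit]
            exact mem_union_right _ ((le_sup (f := id) hXD) hd)
          have hdU : d ∈ J₁ ∪ J₂ := hDU hdD
          have hdA : d ∉ A := fun h => hAD d h hdD
          rcases mem_union.mp hdU with hdJ | hdJ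
          · -- d ∈ J₁ \ J₂
            have hdJ₂ : d ∉ J₂ := fun h => hdA (mem_inter.mpr ⟨hdJ, h⟩)
            exact master B hclosed J₁ J₂ hJ₁ hJ₂ j₁ hj₁ hA hAB P1 P2 (F.sup id) hsup hYU hj₁Y
              ⟨d, mem_inter.mpr ⟨hdY, mem_sdiff.mpr ⟨hdJ, hdJ₂⟩⟩⟩
              ⟨a, mem_inter.mpr ⟨haY, hAJ₂ haA⟩⟩
          · have hdJ₁ : d ∉ J₁ := fun h => hdA (mem_inter.mpr ⟨h, hdJ⟩)
            exact master B hclosed J₂ J₁ hJ₂ hJ₁ j₂ (mem_sdiff.mpr ⟨hj₂2, hj₂1⟩) hA' hAB' P1' P2'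
              (F.sup id) hsup (by rw [union_comm]; exact hYU) hj₂Y
              ⟨d, mem_inter.mpr ⟨hdY, mem_sdiff.mpr ⟨hdJ, hdJ₁⟩⟩⟩
              ⟨a, mem_inter.mpr ⟨haY, hAJ₁ haA⟩⟩


/-- Lemma: if `I₁ ∩ I₂ ∉ B`, there are `J₁, J₂ ∈ B` with nonempty intersection not in
`B`, union contained in `I₁ ∪ I₂`, and elements `j₁, j₂` and maximal nested sets
`N, N'` such that both candidate sets are nested sets of `B`. -/
theorem stmt_4 (S : Finset ℕ) (hS : S.Nonempty) (B : Finset (Finset ℕ))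
    (hB : IsBuilding S B) (hconn : Bmax B = {S})
    (I₁ I₂ : Finset ℕ) (hI₁ : I₁ ∈ B) (hI₂ : I₂ ∈ B)
    (hint : (I₁ ∩ I₂).Nonempty) (h12 : ¬I₁ ⊆ I₂) (h21 : ¬I₂ ⊆ I₁)
    (hcap : I₁ ∩ I₂ ∉ B) :
    ∃ J₁ ∈ B, ∃ J₂ ∈ B, ∃ j₁ ∈ J₁ \ J₂, ∃ j₂ ∈ J₂ \ J₁,
      ∃ N N' : Finset (Finset ℕ),
        MaxNested (restrict B (J₁ ∩ J₂)) N ∧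
        MaxNested (restrict B (((J₁ ∪ J₂) \ (J₁ ∩ J₂)) \ {j₁, j₂})) N' ∧
        (J₁ ∩ J₂).Nonempty ∧ J₁ ∩ J₂ ∉ B ∧ J₁ ∪ J₂ ⊆ I₁ ∪ I₂ ∧
        IsNested B (insert J₁ (N ∪ Bmax (restrict B (J₁ ∩ J₂)) ∪ N' ∪
          Bmax (restrict B (((J₁ ∪ J₂) \ (J₁ ∩ J₂)) \ {j₁, j₂})))) ∧
        IsNested B (insert J₂ (N ∪ Bmax (restrict B (J₁ ∩ J₂)) ∪ N' ∪
          Bmax (restrict B (((J₁ ∪ J₂) \ (J₁ ∩ J₂)) \ {j₁, j₂})))) := by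
  classical
  set f : Finset ℕ × Finset ℕ → ℕ :=
    fun p => (S.card + 1) * (p.1 ∪ p.2).card + (S.card - (p.1 ∩ p.2).card) with hf_def
  set s := (B ×ˢ B).filter
    (fun p => (p.1 ∩ p.2).Nonempty ∧ p.1 ∩ p.2 ∉ B ∧ p.1 ∪ p.2 ⊆ I₁ ∪ I₂) with hs_def
  have hsne : s.Nonempty := by
    refine ⟨(I₁, I₂), mem_filter.mpr ⟨mem_product.mpr ⟨hI₁, hI₂⟩, hint, hcap, Subset.rfl⟩⟩
  obtain ⟨p, hp, hmin⟩ := s.exists_min_image f hsne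
  obtain ⟨hpB, hA, hAB, hUsub⟩ := mem_filter.mp hp
  obtain ⟨hJ₁, hJ₂⟩ := mem_product.mp hpB
  set J₁ := p.1 with hJ₁_def
  set J₂ := p.2 with hJ₂_def
  have hcardS : ∀ K ∈ B, (K : Finset ℕ).card ≤ S.card :=
    fun K hK => card_le_card (hB.1 K hK).1
  have hiJ : (J₁ ∩ J₂).card ≤ S.card :=
    le_trans (card_le_card inter_subset_left) (hcardS J₁ hJ₁)
  -- P1 : minimality of the union
  have P1 : ∀ K₁ ∈ B, ∀ K₂ ∈ B, (K₁ ∩ K₂).Nonempty → K₁ ∩ K₂ ∉ B →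
      K₁ ∪ K₂ ⊆ J₁ ∪ J₂ → K₁ ∪ K₂ = J₁ ∪ J₂ := by
    intro K₁ hK₁ K₂ hK₂ hKne hKnB hKsub
    by_contra hne'
    have hss : K₁ ∪ K₂ ⊂ J₁ ∪ J₂ := Finset.ssubset_iff_subset_ne.mpr ⟨hKsub, hne'⟩
    have hclt : (K₁ ∪ K₂).card < (J₁ ∪ J₂).card := card_lt_card hss
    have hKs : (K₁, K₂) ∈ s := mem_filter.mpr
      ⟨mem_product.mpr ⟨hK₁, hK₂⟩, hKne, hKnB, hKsub.trans hUsub⟩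
    have hle := hmin (K₁, K₂) hKs
    simp only [hf_def] at hle
    have h1 : (S.card + 1) * (J₁ ∪ J₂).card ≤
        (S.card + 1) * (K₁ ∪ K₂).card + (S.card - (K₁ ∩ K₂).card) :=
      le_trans (Nat.le_add_right _ _) hle
    have h2 : (S.card + 1) * ((K₁ ∪ K₂).card + 1) ≤ (S.card + 1) * (J₁ ∪ J₂).card :=
      Nat.mul_le_mul_left _ (by omega)
    rw [Nat.mul_add, Nat.mul_one] at h2
    have h3 := le_trans h2 h1
    have h4 : S.card + 1 ≤ S.card - (K₁ ∩ K₂).card := by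
      exact Nat.le_of_add_le_add_left h3
    have h5 : S.card - (K₁ ∩ K₂).card ≤ S.card := Nat.sub_le _ _
    omega
  -- P2 : maximality of the intersection among minimal unions
  have P2 : ∀ K₁ ∈ B, ∀ K₂ ∈ B, (K₁ ∩ K₂).Nonempty → K₁ ∪ K₂ = J₁ ∪ J₂ →
      J₁ ∩ J₂ ⊂ K₁ ∩ K₂ → K₁ ∩ K₂ ∈ B := by
    intro K₁ hK₁ K₂ hK₂ hKne hKU hKlt
    by_contra hKnB
    have hKs : (K₁, K₂) ∈ s := mem_filter.mpr
      ⟨mem_product.mpr ⟨hK₁, hK₂⟩, hKne, hKnB, hKU ▸ hUsub⟩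
    have hle := hmin (K₁, K₂) hKs
    simp only [hf_def] at hle
    rw [hKU] at hle
    have h1 : S.card - (J₁ ∩ J₂).card ≤ S.card - (K₁ ∩ K₂).card :=
      Nat.le_of_add_le_add_left hle
    have h2 : (J₁ ∩ J₂).card < (K₁ ∩ K₂).card := card_lt_card hKlt
    have h3 : (K₁ ∩ K₂).card ≤ S.card :=
      le_trans (card_le_card inter_subset_left) (hcardS K₁ hK₁)
    omega
  -- choose j₁, j₂
  have hd₁ : (J₁ \ J₂).Nonempty := by
    rw [nonempty_iff_ne_empty]
    intro h
    have hsub : J₁ ⊆ J₂ := sdiff_eq_empty_iff_subset.mp h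
    have h' : J₁ ∩ J₂ = J₁ := inter_eq_left.mpr hsub
    exact hAB (by rw [h']; exact hJ₁)
  have hd₂ : (J₂ \ J₁).Nonempty := by
    rw [nonempty_iff_ne_empty]
    intro h
    have hsub : J₂ ⊆ J₁ := sdiff_eq_empty_iff_subset.mp h
    have h' : J₁ ∩ J₂ = J₂ := inter_eq_right.mpr hsub
    exact hAB (by rw [h']; exact hJ₂)
  obtain ⟨j₁, hj₁⟩ := hd₁
  obtain ⟨j₂, hj₂⟩ := hd₂
  obtain ⟨N, hN⟩ := exists_maxNested (restrict B (J₁ ∩ J₂))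
  obtain ⟨N', hN'⟩ := exists_maxNested (restrict B (((J₁ ∪ J₂) \ (J₁ ∩ J₂)) \ {j₁, j₂}))
  refine ⟨J₁, hJ₁, J₂, hJ₂, j₁, hj₁, j₂, hj₂, N, N', hN, hN', hA, hAB, hUsub, ?_, ?_⟩
  · exact key S B hB hconn J₁ J₂ hJ₁ hJ₂ j₁ j₂ hj₁ hj₂ hA hAB P1 P2 N N' hN.1 hN'.1
  · have hA' : (J₂ ∩ J₁).Nonempty := by rwa [inter_comm]
    have hAB' : J₂ ∩ J₁ ∉ B := by rwa [inter_comm]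
    have P1' : ∀ K₁ ∈ B, ∀ K₂ ∈ B, (K₁ ∩ K₂).Nonempty → K₁ ∩ K₂ ∉ B →
        K₁ ∪ K₂ ⊆ J₂ ∪ J₁ → K₁ ∪ K₂ = J₂ ∪ J₁ := by
      intro K₁ h1 K₂ h2 h3 h4 h5
      rw [union_comm J₂ J₁] at h5 ⊢
      exact P1 K₁ h1 K₂ h2 h3 h4 h5
    have P2' : ∀ K₁ ∈ B, ∀ K₂ ∈ B, (K₁ ∩ K₂).Nonempty → K₁ ∪ K₂ = J₂ ∪ J₁ →
        J₂ ∩ J₁ ⊂ K₁ ∩ K₂ → K₁ ∩ K₂ ∈ B := by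
      intro K₁ h1 K₂ h2 h3 h4 h5
      rw [union_comm J₂ J₁] at h4
      rw [inter_comm J₂ J₁] at h5
      exact P2 K₁ h1 K₂ h2 h3 h4 h5
    have hN2 : IsNested (restrict B (J₂ ∩ J₁)) N := by
      rw [inter_comm J₂ J₁]; exact hN.1
    have hN'2 : IsNested (restrict B (((J₂ ∪ J₁) \ (J₂ ∩ J₁)) \ {j₂, j₁})) N' := by
      rw [union_comm J₂ J₁, inter_comm J₂ J₁, pair_comm j₂ j₁]; exact hN'.1
    have hres := key S B hB hconn J₂ J₁ hJ₂ hJ₁ j₂ j₁ hj₂ hj₁ hA' hAB' P1' P2' N N' hN2 hN'2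
    rwa [inter_comm J₂ J₁, union_comm J₂ J₁, pair_comm j₂ j₁] at hres
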